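/- arXiv:1901.08653 — 3 statements merged into one kernel-verified Lean document; each statement's English description precedes it below -/
import Mathlib

section
/- Let n be a positive integer and let i be an integer with 0 < i < n. Then the alternating sum over k from 0 to i of (-1)^k · (n/(n-k)) · C(n-k, k) · C(n-2k, i-k) equals 0, where the arithmetic is carried out in the rational numbers and a binomial coefficient C(m, r) with 0 ≤ m < r or with m < 0 arising here contributes 0 to the sum (when m < 0, the accompanying factor C(n-k, k) vanishes since n - k < k). Equivalently, working over ℚ: ∑_{k=0}^{i} (-1)^k · (n/(n-k)) · (n-k choose k) · (n-2k choose i-k) = 0. -/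
open Finset Polynomial

lemma tri (n i k : ℕ) (hk : k ≤ i) :
    (n - k).choose k * (n - 2 * k).choose (i - k) = i.choose k * (n - k).choose i := by
  rcases le_or_gt i (n - k) with h | h
  · have h2 : n - 2 * k = n - k - k := by omega
    rw [h2, ← Nat.choose_mul (n := n - k) hk, mul_comm]
  · rw [Nat.choose_eq_zero_of_lt h, mul_zero]
    rcases le_or_gt k (n - k) with h3 | h3
    · rw [Nat.choose_eq_zero_of_lt (show n - 2 * k < i - k by omega), mul_zero]
    · rw [Nat.choose_eq_zero_of_lt h3, zero_mul]

lemma f1 (n i : ℕ) (h : i ≤ n) :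
    ∑ k ∈ range (i + 1), (-1 : ℚ) ^ k * (i.choose k : ℚ) * ((n - k).choose i : ℚ) = 1 := by
  have key : ∑ k ∈ range (i + 1),
      C ((-1 : ℚ) ^ k * (i.choose k : ℚ)) * (X + 1) ^ (n - k)
      = X ^ i * (X + 1) ^ (n - i) := by
    have step : ∀ k ∈ range (i + 1),
        C ((-1 : ℚ) ^ k * (i.choose k : ℚ)) * (X + 1) ^ (n - k)
        = ((X + 1) ^ (i - k) * C ((-1 : ℚ) ^ k * (i.choose k : ℚ))) * (X + 1) ^ (n - i) := by
      intro k hk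
      rw [mem_range] at hk
      have hnk : n - k = (i - k) + (n - i) := by omega
      rw [hnk, pow_add]; ring
    rw [Finset.sum_congr rfl step, ← Finset.sum_mul]
    congr 1
    have hsub := sub_pow (X + 1 : ℚ[X]) 1 i
    simp only [add_sub_cancel_right, one_pow, mul_one] at hsub
    rw [hsub, ← Finset.sum_range_reflect]
    apply Finset.sum_congr rfl
    intro k hk
    rw [mem_range] at hk
    have hk' : k ≤ i := by omega
    have h1 : i + 1 - 1 - k = i - k := by omega
    have h2 : i.choose (i - k) = i.choose k := Nat.choose_symm hk'
    rw [h1, h2, show i - (i - k) = k by omega, C_mul, map_pow, map_neg, map_one,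
      show k + i = (i - k) + 2 * k by omega, pow_add, pow_mul, Polynomial.C_eq_natCast]
    ring
  have hthis := congrArg (fun p => Polynomial.coeff p i) key
  simp only [Polynomial.finset_sum_coeff, Polynomial.coeff_C_mul,
    Polynomial.coeff_X_add_one_pow] at hthis
  have hr : (X ^ i * (X + 1) ^ (n - i) : ℚ[X]).coeff i = 1 := by
    have h0 := Polynomial.coeff_X_pow_mul ((X + 1 : ℚ[X]) ^ (n - i)) i 0
    rw [zero_add] at h0
    rw [h0, Polynomial.coeff_X_add_one_pow, Nat.choose_zero_right, Nat.cast_one]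
  rw [hr] at hthis
  exact hthis

lemma f2 (n i : ℕ) (h : i ≤ n) :
    ∑ k ∈ range (i + 1), (-1 : ℚ) ^ k * ((n - k).choose k : ℚ) *
      ((n - 2 * k).choose (i - k) : ℚ) = 1 := by
  refine Eq.trans ?_ (f1 n i h)
  apply Finset.sum_congr rfl
  intro k hk
  rw [mem_range] at hk
  have htri := tri n i k (by omega)
  have hq : (((n - k).choose k : ℚ)) * ((n - 2 * k).choose (i - k) : ℚ)
      = (i.choose k : ℚ) * ((n - k).choose i : ℚ) := by exact_mod_cast congrArg (Nat.cast : ℕ → ℚ) htri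
  rw [mul_assoc, hq, mul_assoc]

/-- Linear dependence on vertically aligned entries in Pascal's triangle:
for `0 < i < n`, `∑_{k=0}^{i} (-1)^k · (n/(n-k)) · C(n-k, k) · C(n-2k, i-k) = 0` in `ℚ`.
Binomial coefficients with truncated (natural) subtraction realize the convention that
`C(m, r) = 0` for `0 ≤ m < r`, and when the top `n - 2k` would be negative the
accompanying factor `C(n-k, k)` vanishes since `n - k < k`. -/
theorem pascal_vertical_dependence (n i : ℕ) (hi : 0 < i) (hin : i < n) :
    ∑ k ∈ Finset.range (i + 1),
      (-1 : ℚ) ^ k * ((n : ℚ) / ((n : ℚ) - (k : ℚ))) *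
        (Nat.choose (n - k) k : ℚ) * (Nat.choose (n - 2 * k) (i - k) : ℚ) = 0 := by
  have split : ∀ k ∈ range (i + 1),
      (-1 : ℚ) ^ k * ((n : ℚ) / ((n : ℚ) - (k : ℚ))) *
        (Nat.choose (n - k) k : ℚ) * (Nat.choose (n - 2 * k) (i - k) : ℚ)
      = (-1 : ℚ) ^ k * ((n - k).choose k : ℚ) * ((n - 2 * k).choose (i - k) : ℚ)
        + (-1 : ℚ) ^ k * ((k : ℚ) / ((n : ℚ) - (k : ℚ))) *
          ((n - k).choose k : ℚ) * ((n - 2 * k).choose (i - k) : ℚ) := by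
    intro k hk
    rw [mem_range] at hk
    have hne : ((n : ℚ) - (k : ℚ)) ≠ 0 := by
      have : (k : ℚ) < (n : ℚ) := by exact_mod_cast (by omega : k < n)
      intro hc; linarith
    have : (n : ℚ) / ((n : ℚ) - (k : ℚ)) = 1 + (k : ℚ) / ((n : ℚ) - (k : ℚ)) := by
      field_simp
      ring
    rw [this]; ring
  rw [Finset.sum_congr rfl split, Finset.sum_add_distrib]
  have hA : ∑ k ∈ range (i + 1), (-1 : ℚ) ^ k * ((n - k).choose k : ℚ) *
      ((n - 2 * k).choose (i - k) : ℚ) = 1 := f2 n i (by omega)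
  have hB : ∑ k ∈ range (i + 1), (-1 : ℚ) ^ k * ((k : ℚ) / ((n : ℚ) - (k : ℚ))) *
      ((n - k).choose k : ℚ) * ((n - 2 * k).choose (i - k) : ℚ) = -1 := by
    rw [Finset.sum_range_succ']
    simp only [Nat.cast_zero, zero_div, mul_zero, zero_mul, mul_zero, pow_zero]
    rw [add_zero]
    have step : ∀ k ∈ range i,
        (-1 : ℚ) ^ (k + 1) * (((k + 1 : ℕ) : ℚ) / ((n : ℚ) - ((k + 1 : ℕ) : ℚ))) *
          ((n - (k + 1)).choose (k + 1) : ℚ) * ((n - 2 * (k + 1)).choose (i - (k + 1)) : ℚ)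
        = -((-1 : ℚ) ^ k * (((n - 2) - k).choose k : ℚ) *
            (((n - 2) - 2 * k).choose ((i - 1) - k) : ℚ)) := by
      intro k hk
      rw [mem_range] at hk
      -- k + 1 ≤ i < n, so n - (k+1) ≥ 1
      have hkn : k + 2 ≤ n := by omega
      have hmain : (((k + 1 : ℕ) : ℚ) / ((n : ℚ) - ((k + 1 : ℕ) : ℚ))) *
          ((n - (k + 1)).choose (k + 1) : ℚ) = (((n - 2) - k).choose k : ℚ) := by
        have hnat := Nat.add_one_mul_choose_eq (n - k - 2) k
        -- (n-k-1) * C(n-k-2, k) = C(n-k-1, k+1) * (k+1)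
        have e1 : n - k - 2 + 1 = n - k - 1 := by omega
        have e2 : n - (k + 1) = n - k - 1 := by omega
        have e3 : (n - 2) - k = n - k - 2 := by omega
        rw [e1] at hnat
        rw [e2, e3]
        have hq : ((n - k - 1 : ℕ) : ℚ) * ((n - k - 2).choose k : ℚ)
            = ((n - k - 1).choose (k + 1) : ℚ) * ((k + 1 : ℕ) : ℚ) := by
          exact_mod_cast congrArg (Nat.cast : ℕ → ℚ) hnat
        have hcast : ((n - k - 1 : ℕ) : ℚ) = (n : ℚ) - ((k + 1 : ℕ) : ℚ) := by
          rw [show n - k - 1 = n - (k + 1) by omega, Nat.cast_sub (by omega)]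
        have hne : (n : ℚ) - ((k + 1 : ℕ) : ℚ) ≠ 0 := by
          rw [← hcast]
          exact_mod_cast (show (n - k - 1 : ℕ) ≠ 0 by omega)
        rw [div_mul_eq_mul_div, div_eq_iff hne, ← hcast]
        linear_combination -hq
      have e4 : n - 2 * (k + 1) = (n - 2) - 2 * k := by omega
      have e5 : i - (k + 1) = (i - 1) - k := by omega
      rw [e4, e5, pow_succ]
      rw [show (-1 : ℚ) ^ k * -1 * (((k + 1 : ℕ) : ℚ) / ((n : ℚ) - ((k + 1 : ℕ) : ℚ))) *
          (((n - (k + 1)).choose (k + 1) : ℚ)) * ((((n - 2) - 2 * k).choose ((i - 1) - k) : ℚ))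
          = -((-1 : ℚ) ^ k * ((((k + 1 : ℕ) : ℚ) / ((n : ℚ) - ((k + 1 : ℕ) : ℚ))) *
            (((n - (k + 1)).choose (k + 1) : ℚ))) * ((((n - 2) - 2 * k).choose ((i - 1) - k) : ℚ)))
          from by ring, hmain]
    rw [Finset.sum_congr rfl step, Finset.sum_neg_distrib]
    have hf := f2 (n - 2) (i - 1) (by omega)
    rw [show (i - 1) + 1 = i by omega] at hf
    rw [hf]
  rw [hA, hB]; ring
end

section
/- Let n be a positive integer and let i be an integer with 0 < i < n. Then, as an identity of integers, ∑_{k=0}^{i} (-1)^k · [C(n-k, k) + C(n-k-1, k-1)] · C(n-2k, i-k) = 0, where C(m, r) denotes the binomial coefficient with the conventions C(m, r) = 0 for 0 ≤ m < r, C(m, r) = 0 for r < 0 unless interpreting C(n-k-1, -1) = 0 at k = 0 (so the k = 0 term is C(n,0)·C(n, i) = C(n, i)), and any binomial coefficient whose top argument n-2k is negative is multiplied by a factor C(n-k,k) + C(n-k-1,k-1) that vanishes. -/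
/-- The Lucas-coefficient triangle `T(n, k) = C(n-k, k) + C(n-k-1, k-1)` as an integer,
with the convention `C(m, -1) = 0`, so that `T(n, 0) = C(n, 0) = 1`. -/
def lucasT (n k : ℕ) : ℤ :=
  (Nat.choose (n - k) k : ℤ) + if k = 0 then 0 else (Nat.choose (n - k - 1) (k - 1) : ℤ)


lemma diff_one : ∀ (i n : ℕ), i ≤ n →
    (∑ k ∈ Finset.range (i + 1),
      (-1 : ℤ) ^ k * (Nat.choose i k : ℤ) * (Nat.choose (n - k) i : ℤ)) = 1 := by
  intro i
  induction i with
  | zero => intro n _; simp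
  | succ i ih =>
    intro n hn
    have key : ∀ k ∈ Finset.range (i + 1),
        (-1 : ℤ) ^ k * (Nat.choose i k : ℤ) * (Nat.choose (n - k) (i + 1) : ℤ)
          - (-1 : ℤ) ^ k * (Nat.choose i k : ℤ) * (Nat.choose (n - 1 - k) (i + 1) : ℤ)
        = (-1 : ℤ) ^ k * (Nat.choose i k : ℤ) * (Nat.choose (n - 1 - k) i : ℤ) := by
      intro k hk
      have hk' : k ≤ i := Nat.lt_succ_iff.mp (Finset.mem_range.mp hk)
      have h1 : n - k = (n - 1 - k) + 1 := by omega
      rw [h1, Nat.choose_succ_succ]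
      push_cast
      ring
    -- peel off k = 0 and reindex
    have expand : (∑ k ∈ Finset.range (i + 2),
        (-1 : ℤ) ^ k * (Nat.choose (i + 1) k : ℤ) * (Nat.choose (n - k) (i + 1) : ℤ))
      = ∑ k ∈ Finset.range (i + 1),
          ((-1 : ℤ) ^ k * (Nat.choose i k : ℤ) * (Nat.choose (n - k) (i + 1) : ℤ)
           - (-1 : ℤ) ^ k * (Nat.choose i k : ℤ) * (Nat.choose (n - 1 - k) (i + 1) : ℤ)) := by
      rw [Finset.sum_sub_distrib]
      rw [Finset.sum_range_succ' (fun k =>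
        (-1 : ℤ) ^ k * (Nat.choose (i + 1) k : ℤ) * (Nat.choose (n - k) (i + 1) : ℤ))]
      have hsplit : ∀ j, ((i + 1).choose (j + 1) : ℤ) = (i.choose j : ℤ) + (i.choose (j + 1) : ℤ) := by
        intro j; rw [Nat.choose_succ_succ]; push_cast; ring
      have : ∀ j ∈ Finset.range (i + 1),
          (-1 : ℤ) ^ (j + 1) * (Nat.choose (i + 1) (j + 1) : ℤ) * (Nat.choose (n - (j + 1)) (i + 1) : ℤ)
          = (-1 : ℤ) ^ (j + 1) * (Nat.choose i (j + 1) : ℤ) * (Nat.choose (n - (j + 1)) (i + 1) : ℤ)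
            - (-1 : ℤ) ^ j * (Nat.choose i j : ℤ) * (Nat.choose (n - 1 - j) (i + 1) : ℤ) := by
        intro j hj
        have hn1 : n - (j + 1) = n - 1 - j := by omega
        rw [hsplit j, hn1]
        push_cast; ring
      rw [Finset.sum_congr rfl this, Finset.sum_sub_distrib]
      have h2 : (∑ j ∈ Finset.range (i + 1),
          (-1 : ℤ) ^ (j + 1) * (Nat.choose i (j + 1) : ℤ) * (Nat.choose (n - (j + 1)) (i + 1) : ℤ))
          + (-1 : ℤ) ^ 0 * (Nat.choose i 0 : ℤ) * (Nat.choose (n - 0) (i + 1) : ℤ)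
          = ∑ k ∈ Finset.range (i + 2),
            (-1 : ℤ) ^ k * (Nat.choose i k : ℤ) * (Nat.choose (n - k) (i + 1) : ℤ) :=
        (Finset.sum_range_succ' (fun k =>
          (-1 : ℤ) ^ k * (Nat.choose i k : ℤ) * (Nat.choose (n - k) (i + 1) : ℤ)) (i + 1)).symm
      have h3 : (∑ k ∈ Finset.range (i + 2),
            (-1 : ℤ) ^ k * (Nat.choose i k : ℤ) * (Nat.choose (n - k) (i + 1) : ℤ))
          = ∑ k ∈ Finset.range (i + 1),
            (-1 : ℤ) ^ k * (Nat.choose i k : ℤ) * (Nat.choose (n - k) (i + 1) : ℤ) := by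
        rw [Finset.sum_range_succ, Nat.choose_succ_self]
        simp
      simp at h2 ⊢
      linarith [h2, h3]
    rw [expand, Finset.sum_congr rfl key]
    have : ∀ k ∈ Finset.range (i+1), (-1:ℤ)^k * (Nat.choose i k : ℤ) * (Nat.choose (n-1-k) i : ℤ)
        = (-1:ℤ)^k * (Nat.choose i k : ℤ) * (Nat.choose ((n-1)-k) i : ℤ) := by intro k _; rfl
    exact ih (n-1) (by omega)

lemma A_eq_one (n i : ℕ) (h : i ≤ n) :
    (∑ k ∈ Finset.range (i + 1),
      (-1 : ℤ) ^ k * (Nat.choose (n - k) k : ℤ) * (Nat.choose (n - 2 * k) (i - k) : ℤ)) = 1 := by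
  refine Eq.trans ?_ (diff_one i n h)
  apply Finset.sum_congr rfl
  intro k hk
  have hk' : k ≤ i := Nat.lt_succ_iff.mp (Finset.mem_range.mp hk)
  have hnat : (n - k).choose k * (n - 2 * k).choose (i - k) = i.choose k * (n - k).choose i := by
    by_cases hik : i ≤ n - k
    · have := Nat.choose_mul (n := n - k) (k := i) (s := k) hk'
      have h2 : n - k - k = n - 2 * k := by omega
      rw [h2] at this
      rw [← this]; ring
    · push_neg at hik
      rw [Nat.choose_eq_zero_of_lt hik]
      by_cases hkk : k ≤ n - k
      · have : n - 2 * k < i - k := by omega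
        rw [Nat.choose_eq_zero_of_lt this]; ring
      · push_neg at hkk
        rw [Nat.choose_eq_zero_of_lt hkk]; ring
  have : ((n - k).choose k : ℤ) * ((n - 2 * k).choose (i - k) : ℤ)
      = (i.choose k : ℤ) * ((n - k).choose i : ℤ) := by exact_mod_cast hnat
  calc (-1 : ℤ) ^ k * ((n - k).choose k : ℤ) * ((n - 2 * k).choose (i - k) : ℤ)
      = (-1 : ℤ) ^ k * (((n - k).choose k : ℤ) * ((n - 2 * k).choose (i - k) : ℤ)) := by ring
    _ = (-1 : ℤ) ^ k * ((i.choose k : ℤ) * ((n - k).choose i : ℤ)) := by rw [this]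
    _ = (-1 : ℤ) ^ k * (i.choose k : ℤ) * ((n - k).choose i : ℤ) := by ring





/-- For `0 < i < n`, `∑_{k=0}^{i} (-1)^k · [C(n-k, k) + C(n-k-1, k-1)] · C(n-2k, i-k) = 0`
as an identity of integers.  Natural subtraction in the binomial coefficients realizes the
convention `C(m, r) = 0` for `0 ≤ m < r`; terms whose top argument `n - 2k` would be
negative carry a vanishing factor `C(n-k, k) + C(n-k-1, k-1)`. -/
theorem pascal_vertical_dependence_int (n i : ℕ) (hi : 0 < i) (hin : i < n) :
    ∑ k ∈ Finset.range (i + 1),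
      (-1 : ℤ) ^ k * lucasT n k * (Nat.choose (n - 2 * k) (i - k) : ℤ) = 0 := by

  obtain ⟨m, rfl⟩ : ∃ m, i = m + 1 := ⟨i - 1, by omega⟩
  have split : ∀ k ∈ Finset.range (m + 2),
      (-1 : ℤ) ^ k * lucasT n k * (Nat.choose (n - 2 * k) (m + 1 - k) : ℤ)
      = (-1 : ℤ) ^ k * ((n - k).choose k : ℤ) * ((n - 2 * k).choose (m + 1 - k) : ℤ)
        + (-1 : ℤ) ^ k * (if k = 0 then 0 else ((n - k - 1).choose (k - 1) : ℤ))
            * ((n - 2 * k).choose (m + 1 - k) : ℤ) := by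
    intro k _
    unfold lucasT
    ring
  rw [Finset.sum_congr rfl split, Finset.sum_add_distrib,
    A_eq_one n (m + 1) (by omega)]
  have hB : (∑ k ∈ Finset.range (m + 2),
      (-1 : ℤ) ^ k * (if k = 0 then 0 else ((n - k - 1).choose (k - 1) : ℤ))
        * ((n - 2 * k).choose (m + 1 - k) : ℤ)) = -1 := by
    rw [Finset.sum_range_succ' (fun k =>
      (-1 : ℤ) ^ k * (if k = 0 then 0 else ((n - k - 1).choose (k - 1) : ℤ))
        * ((n - 2 * k).choose (m + 1 - k) : ℤ)) (m + 1)]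
    have hterm : ∀ j ∈ Finset.range (m + 1),
        (-1 : ℤ) ^ (j + 1) * (if j + 1 = 0 then 0 else ((n - (j + 1) - 1).choose (j + 1 - 1) : ℤ))
          * ((n - 2 * (j + 1)).choose (m + 1 - (j + 1)) : ℤ)
        = -((-1 : ℤ) ^ j * ((n - 2 - j).choose j : ℤ) * ((n - 2 - 2 * j).choose (m - j) : ℤ)) := by
      intro j _
      have e1 : n - (j + 1) - 1 = n - 2 - j := by omega
      have e2 : j + 1 - 1 = j := by omega
      have e3 : n - 2 * (j + 1) = n - 2 - 2 * j := by omega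
      have e4 : m + 1 - (j + 1) = m - j := by omega
      simp only [Nat.succ_ne_zero, if_false, e1, e2, e3, e4]
      ring
    rw [Finset.sum_congr rfl hterm, Finset.sum_neg_distrib]
    have := A_eq_one (n - 2) m (by omega)
    rw [this]
    norm_num
  rw [hB]
  ring
end

section
/- (Lockwood's identity.) Let R be a commutative ring, let x, y ∈ R, and let n ≥ 1 be an integer. Then x^n + y^n = ∑_{k=0}^{⌊n/2⌋} (-1)^k · T(n, k) · (xy)^k · (x+y)^{n-2k}, where T(n, k) = C(n-k, k) + C(n-k-1, k-1) is the integer (n/(n-k))·C(n-k, k) (with T(n, 0) = 1). -/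
lemma lucasT_zero (n : ℕ) : lucasT n 0 = 1 := by simp [lucasT]

lemma lucasT_rec (n k : ℕ) (hn : 3 ≤ n) (hk : 1 ≤ k) (h2 : 2 * k ≤ n) :
    lucasT n k = lucasT (n - 1) k + lucasT (n - 2) (k - 1) := by
  obtain ⟨a, rfl⟩ : ∃ a, k = a + 1 := ⟨k - 1, by omega⟩
  obtain ⟨b, rfl⟩ : ∃ b, n = a + b + 3 := ⟨n - a - 3, by omega⟩
  unfold lucasT
  have e1 : a + b + 3 - (a + 1) = b + 2 := by omega
  have e2 : b + 2 - 1 = b + 1 := by omega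
  have e3 : a + b + 3 - 1 - (a + 1) = b + 1 := by omega
  have e4 : b + 1 - 1 = b := by omega
  have e5 : a + b + 3 - 2 - a = b + 1 := by omega
  simp only [e1, e2, e3, e4, e5, Nat.add_sub_cancel]
  rcases Nat.eq_zero_or_pos a with rfl | ha
  · simp [Nat.choose_succ_succ]; ring
  · obtain ⟨c, rfl⟩ : ∃ c, a = c + 1 := ⟨a - 1, by omega⟩
    simp only [if_neg (by omega : ¬ c + 1 + 1 = 0), if_neg (by omega : ¬ c + 1 = 0),
      Nat.add_sub_cancel]
    simp [Nat.choose_succ_succ]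
    ring

lemma lucasT_vanish (a : ℕ) : lucasT (2 * a + 3) (a + 2) = 0 := by
  have h1 : 2 * a + 3 - (a + 2) = a + 1 := by omega
  simp [lucasT, h1, Nat.choose_eq_zero_of_lt]

lemma core {R : Type*} [CommRing R] (x y : R) (n M : ℕ) (hn : 3 ≤ n) (hM : 2 * M ≤ n) :
    ∑ k ∈ Finset.range (M + 1),
        ((-1 : ℤ) ^ k * lucasT n k) • ((x * y) ^ k * (x + y) ^ (n - 2 * k)) =
    (∑ k ∈ Finset.range (M + 1),
        ((-1 : ℤ) ^ k * lucasT (n - 1) k) • ((x * y) ^ k * (x + y) ^ (n - 2 * k)))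
    - ∑ k ∈ Finset.range M,
        (x * y) * (((-1 : ℤ) ^ k * lucasT (n - 2) k) • ((x * y) ^ k * (x + y) ^ (n - 2 - 2 * k))) := by
  have h0 : ((-1 : ℤ) ^ 0 * lucasT n 0) • ((x * y) ^ 0 * (x + y) ^ (n - 2 * 0)) =
      ((-1 : ℤ) ^ 0 * lucasT (n - 1) 0) • ((x * y) ^ 0 * (x + y) ^ (n - 2 * 0)) := by
    simp [lucasT_zero]
  rw [Finset.sum_range_succ', Finset.sum_range_succ', h0, add_sub_right_comm]
  congr 1
  rw [← Finset.sum_sub_distrib]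
  apply Finset.sum_congr rfl
  intro k hk
  simp only [Finset.mem_range] at hk
  rw [lucasT_rec n (k + 1) hn (by omega) (by omega), Nat.add_sub_cancel,
    mul_smul_comm,
    show (x * y) * ((x * y) ^ k * (x + y) ^ (n - 2 - 2 * k)) =
        (x * y) ^ (k + 1) * (x + y) ^ (n - 2 * (k + 1)) from by
      rw [show n - 2 - 2 * k = n - 2 * (k + 1) from by omega]; ring,
    ← sub_smul]
  congr 1
  ring

lemma sum_rec {R : Type*} [CommRing R] (x y : R) (n : ℕ) (hn : 3 ≤ n) :
    ∑ k ∈ Finset.range (n / 2 + 1),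
        ((-1 : ℤ) ^ k * lucasT n k) • ((x * y) ^ k * (x + y) ^ (n - 2 * k)) =
    (x + y) * (∑ k ∈ Finset.range ((n - 1) / 2 + 1),
        ((-1 : ℤ) ^ k * lucasT (n - 1) k) • ((x * y) ^ k * (x + y) ^ (n - 1 - 2 * k)))
    - (x * y) * (∑ k ∈ Finset.range ((n - 2) / 2 + 1),
        ((-1 : ℤ) ^ k * lucasT (n - 2) k) • ((x * y) ^ k * (x + y) ^ (n - 2 - 2 * k))) := by
  rw [Finset.mul_sum, Finset.mul_sum, show (n - 2) / 2 + 1 = n / 2 from by omega,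
    core x y n (n / 2) hn (by omega)]
  congr 1
  have hterm : ∀ k, 2 * k ≤ n - 1 →
      ((-1 : ℤ) ^ k * lucasT (n - 1) k) • ((x * y) ^ k * (x + y) ^ (n - 2 * k)) =
      (x + y) * (((-1 : ℤ) ^ k * lucasT (n - 1) k) • ((x * y) ^ k * (x + y) ^ (n - 1 - 2 * k))) := by
    intro k hk
    rw [mul_smul_comm]
    congr 1
    rw [show n - 2 * k = (n - 1 - 2 * k) + 1 from by omega]
    ring
  rcases Nat.even_or_odd' n with ⟨a, rfl | rfl⟩
  · -- n = 2a even, n ≥ 4 so a ≥ 2, write a = b + 2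
    obtain ⟨b, rfl⟩ : ∃ b, a = b + 2 := ⟨a - 2, by omega⟩
    have h1 : 2 * (b + 2) / 2 + 1 = (b + 2) + 1 := by omega
    have h2 : (2 * (b + 2) - 1) / 2 + 1 = b + 2 := by omega
    rw [h1, h2, Finset.sum_range_succ]
    have hz : lucasT (2 * (b + 2) - 1) (b + 2) = 0 := by
      rw [show 2 * (b + 2) - 1 = 2 * b + 3 from by omega]
      exact lucasT_vanish b
    rw [hz]
    simp only [mul_zero, zero_smul, add_zero]
    apply Finset.sum_congr rfl
    intro k hk
    simp only [Finset.mem_range] at hk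
    exact hterm k (by omega)
  · have h1 : (2 * a + 1) / 2 + 1 = a + 1 := by omega
    have h2 : (2 * a + 1 - 1) / 2 + 1 = a + 1 := by omega
    rw [h1, h2]
    apply Finset.sum_congr rfl
    intro k hk
    simp only [Finset.mem_range] at hk
    exact hterm k (by omega)

/-- Lockwood's identity: in any commutative ring, for `n ≥ 1`,
`x^n + y^n = ∑_{k=0}^{⌊n/2⌋} (-1)^k · T(n, k) · (xy)^k · (x+y)^{n-2k}`. -/
theorem lockwood_identity {R : Type*} [CommRing R] (x y : R) (n : ℕ) (hn : 1 ≤ n) :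
    x ^ n + y ^ n =
      ∑ k ∈ Finset.range (n / 2 + 1),
        ((-1 : ℤ) ^ k * lucasT n k) • ((x * y) ^ k * (x + y) ^ (n - 2 * k)) := by
  induction n using Nat.strong_induction_on with
  | _ n ih =>
  match n, hn with
  | 1, _ => simp [lucasT_zero]
  | 2, _ =>
    rw [show (2 : ℕ) / 2 + 1 = 2 from rfl, Finset.sum_range_succ, Finset.sum_range_succ,
      Finset.sum_range_zero]
    norm_num [lucasT, zsmul_eq_mul]
    ring
  | (m + 3), _ =>
    have h1 := ih (m + 2) (by omega) (by omega)
    have h2 := ih (m + 1) (by omega) (by omega)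
    rw [sum_rec x y (m + 3) (by omega), show m + 3 - 1 = m + 2 from rfl,
      show m + 3 - 2 = m + 1 from rfl, ← h1, ← h2]
    ring
end
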